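/- Let φ be a Bernstein function, φ(z) = c + d·z + ∫_(0,∞) (1 − e^{-zy}) ν(dy). Then for all a, b ≥ 0 and all ξ ∈ ℝ: |φ(a+iξ) − φ(b+iξ)| ≤ φ(|a−b|) − φ(0). Consequently, for all a ≥ 0, b > 0 with φ(b) > 0 and all ξ ∈ ℝ: |φ(a+iξ)/φ(b+iξ) − 1| ≤ (φ(|a−b|) − φ(0))/φ(b). -/

import Mathlib

open MeasureTheory Set
open scoped ENNReal

lemma norm_one_sub_exp_le (w : ℂ) (hw : w.re ≤ 0) :
    ‖1 - Complex.exp w‖ ≤ 2 * min ‖w‖ 1 := by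
  have hexp : ‖Complex.exp w‖ ≤ 1 := by
    rw [Complex.norm_exp]
    calc Real.exp w.re ≤ Real.exp 0 := Real.exp_le_exp.2 hw
    _ = 1 := Real.exp_zero
  rcases le_total ‖w‖ 1 with h | h
  · rw [min_eq_left h, norm_sub_rev]
    exact Complex.norm_exp_sub_one_le h
  · rw [min_eq_right h]
    calc ‖1 - Complex.exp w‖ ≤ ‖(1:ℂ)‖ + ‖Complex.exp w‖ := norm_sub_le _ _
    _ ≤ 1 + 1 := by rw [norm_one]; linarith
    _ = 2 * 1 := by ring

lemma min_integrable (ν : Measure ℝ)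
    (hν : ∫⁻ y in Set.Ioi (0:ℝ), ENNReal.ofReal (min y 1) ∂ν ≠ ⊤) :
    Integrable (fun y : ℝ => min y 1) (ν.restrict (Set.Ioi 0)) := by
  refine ⟨(continuous_id.min continuous_const).aestronglyMeasurable, ?_⟩
  rw [hasFiniteIntegral_iff_ofReal ?_]
  · exact hν.lt_top
  · filter_upwards [ae_restrict_mem measurableSet_Ioi] with y hy
    have : (0:ℝ) < y := hy
    simp only [Pi.zero_apply, le_min_iff]
    constructor <;> linarith

lemma bern_integrable (ν : Measure ℝ)
    (hν : ∫⁻ y in Set.Ioi (0:ℝ), ENNReal.ofReal (min y 1) ∂ν ≠ ⊤)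
    (z : ℂ) (hz : 0 ≤ z.re) :
    Integrable (fun y : ℝ => 1 - Complex.exp (-z * (y : ℂ))) (ν.restrict (Set.Ioi 0)) := by
  have hg := (min_integrable ν hν).const_mul (2 * max ‖z‖ 1)
  refine hg.mono' ?_ ?_
  · exact Continuous.aestronglyMeasurable (by continuity)
  · filter_upwards [ae_restrict_mem measurableSet_Ioi] with y hy
    have hy0 : (0:ℝ) < y := hy
    have hre : (-z * (y:ℂ)).re ≤ 0 := by
      simp only [Complex.neg_re, Complex.mul_re, Complex.ofReal_re, Complex.ofReal_im,
        mul_zero, sub_zero, neg_mul]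
      nlinarith
    have h1 := norm_one_sub_exp_le (-z * (y:ℂ)) hre
    have hnorm : ‖(-z * (y:ℂ))‖ = ‖z‖ * y := by
      rw [norm_mul, norm_neg, Complex.norm_real, Real.norm_eq_abs, abs_of_pos hy0]
    have h2 : min ‖(-z * (y:ℂ))‖ 1 ≤ max ‖z‖ 1 * min y 1 := by
      rw [hnorm]
      rcases le_total y 1 with h | h
      · rw [min_eq_left h]
        calc min (‖z‖ * y) 1 ≤ ‖z‖ * y := min_le_left _ _
        _ ≤ max ‖z‖ 1 * y := mul_le_mul_of_nonneg_right (le_max_left _ _) hy0.le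
      · rw [min_eq_right h]
        calc min (‖z‖ * y) 1 ≤ 1 := min_le_right _ _
        _ ≤ max ‖z‖ 1 := le_max_right _ _
        _ = max ‖z‖ 1 * 1 := (mul_one _).symm
    calc ‖1 - Complex.exp (-z * (y:ℂ))‖ ≤ 2 * min ‖(-z * (y:ℂ))‖ 1 := h1
    _ ≤ 2 * (max ‖z‖ 1 * min y 1) := by linarith
    _ = 2 * max ‖z‖ 1 * min y 1 := by ring

lemma bern_re_eq (r y : ℝ) :
    (1 - Complex.exp (-(r:ℂ) * (y:ℂ))).re = 1 - Real.exp (-(r * y)) := by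
  have : -(r:ℂ) * (y:ℂ) = ((-(r*y) : ℝ) : ℂ) := by push_cast; ring
  rw [Complex.sub_re, this, ← Complex.ofReal_exp, Complex.one_re, Complex.ofReal_re]

lemma bern_integrable_real (ν : Measure ℝ)
    (hν : ∫⁻ y in Set.Ioi (0:ℝ), ENNReal.ofReal (min y 1) ∂ν ≠ ⊤)
    (r : ℝ) (hr : 0 ≤ r) :
    Integrable (fun y : ℝ => 1 - Real.exp (-(r * y))) (ν.restrict (Set.Ioi 0)) := by
  have h := (bern_integrable ν hν (r:ℂ) (by simpa using hr)).re
  refine h.congr (Filter.Eventually.of_forall fun y => ?_)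
  exact bern_re_eq r y

lemma exp_diff_le (u v y : ℝ) (hu : 0 ≤ u) (huv : u ≤ v) (hy : 0 ≤ y) :
    |Real.exp (-(u*y)) - Real.exp (-(v*y))| ≤ 1 - Real.exp (-((v-u)*y)) := by
  have h2 : Real.exp (-(v*y)) = Real.exp (-(u*y)) * Real.exp (-((v-u)*y)) := by
    rw [← Real.exp_add]; ring_nf
  have h1 : Real.exp (-(u*y)) ≤ 1 := by
    calc Real.exp (-(u*y)) ≤ Real.exp 0 := Real.exp_le_exp.2 (by nlinarith)
    _ = 1 := Real.exp_zero
  have h3 : Real.exp (-((v-u)*y)) ≤ 1 := by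
    calc Real.exp (-((v-u)*y)) ≤ Real.exp 0 := Real.exp_le_exp.2 (by nlinarith)
    _ = 1 := Real.exp_zero
  have h4 := Real.exp_pos (-((v-u)*y))
  have h5 := Real.exp_pos (-(u*y))
  rw [abs_of_nonneg (by nlinarith)]
  nlinarith

lemma key_pointwise (a b ξ y : ℝ) (ha : 0 ≤ a) (hb : 0 ≤ b) (hy : 0 ≤ y) :
    ‖Complex.exp (-((b:ℂ) + (ξ:ℂ) * Complex.I) * (y:ℂ)) -
      Complex.exp (-((a:ℂ) + (ξ:ℂ) * Complex.I) * (y:ℂ))‖ ≤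
      1 - Real.exp (-(|a - b| * y)) := by
  have factor : ∀ t : ℝ, Complex.exp (-((t:ℂ) + (ξ:ℂ) * Complex.I) * (y:ℂ))
      = Complex.exp (-((ξ:ℂ) * (y:ℂ)) * Complex.I) * Complex.exp ((-(t*y) : ℝ) : ℂ) := by
    intro t
    rw [← Complex.exp_add]
    congr 1
    push_cast
    ring
  rw [factor, factor, ← mul_sub, norm_mul]
  have h1 : ‖Complex.exp (-((ξ:ℂ) * (y:ℂ)) * Complex.I)‖ = 1 := by
    rw [Complex.norm_exp]
    have : (-((ξ:ℂ) * (y:ℂ)) * Complex.I).re = 0 := by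
      simp [Complex.mul_re]
    rw [this, Real.exp_zero]
  rw [h1, one_mul]
  have h2 : Complex.exp ((-(b*y) : ℝ) : ℂ) - Complex.exp ((-(a*y) : ℝ) : ℂ)
      = ((Real.exp (-(b*y)) - Real.exp (-(a*y)) : ℝ) : ℂ) := by
    rw [Complex.ofReal_sub, Complex.ofReal_exp, Complex.ofReal_exp]
  rw [h2, Complex.norm_real, Real.norm_eq_abs]
  rcases le_total a b with h | h
  · have habs : |a - b| = b - a := by rw [abs_of_nonpos (by linarith)]; ring
    rw [habs]
    have := exp_diff_le a b y ha h hy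
    rwa [abs_sub_comm] at this
  · have habs : |a - b| = a - b := abs_of_nonneg (by linarith)
    rw [habs]
    exact exp_diff_le b a y hb h hy

/-- Let `φ` be a Bernstein function,
`φ z = c + d z + ∫_(0,∞) (1 − e^{-z y}) ν(dy)` (for `Re z ≥ 0`).  Then for all
`a, b ≥ 0` and `ξ ∈ ℝ`, `|φ(a+iξ) − φ(b+iξ)| ≤ φ(|a−b|) − φ(0)`; consequently, for
`a ≥ 0`, `b > 0` with `φ(b) > 0`, `|φ(a+iξ)/φ(b+iξ) − 1| ≤ (φ(|a−b|) − φ(0))/φ(b)`. -/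
theorem bernstein_diff_bound
    (c d : ℝ) (hc : 0 ≤ c) (hd : 0 ≤ d)
    (ν : Measure ℝ)
    (hν : ∫⁻ y in Set.Ioi (0:ℝ), ENNReal.ofReal (min y 1) ∂ν ≠ ⊤)
    (φ : ℂ → ℂ)
    (hφ : ∀ z : ℂ, 0 ≤ z.re →
      φ z = (c : ℂ) + (d : ℂ) * z +
        ∫ y in Set.Ioi (0:ℝ), (1 - Complex.exp (-z * (y : ℂ))) ∂ν) :
    (∀ a b : ℝ, 0 ≤ a → 0 ≤ b → ∀ ξ : ℝ,
      ‖φ ((a : ℂ) + (ξ : ℂ) * Complex.I) - φ ((b : ℂ) + (ξ : ℂ) * Complex.I)‖ ≤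
        (φ ((|a - b| : ℝ) : ℂ)).re - (φ 0).re) ∧
    (∀ a b : ℝ, 0 ≤ a → 0 < b → 0 < (φ ((b : ℝ) : ℂ)).re → ∀ ξ : ℝ,
      ‖φ ((a : ℂ) + (ξ : ℂ) * Complex.I) / φ ((b : ℂ) + (ξ : ℂ) * Complex.I) - 1‖ ≤
        ((φ ((|a - b| : ℝ) : ℂ)).re - (φ 0).re) / (φ ((b : ℝ) : ℂ)).re) := by
  have hre : ∀ t ξ : ℝ, ((t:ℂ) + (ξ:ℂ) * Complex.I).re = t := by
    intro t ξ; simp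
  -- φ at 0
  have hφ0 : (φ 0).re = c := by
    rw [hφ 0 (by simp)]
    simp
  -- φ at nonneg real r
  have hφr : ∀ r : ℝ, 0 ≤ r →
      (φ (r:ℂ)).re = c + d * r + ∫ y in Set.Ioi (0:ℝ), (1 - Real.exp (-(r*y))) ∂ν := by
    intro r hr
    rw [hφ (r:ℂ) (by simpa using hr), Complex.add_re, Complex.add_re]
    have h1 : ((c:ℂ)).re = c := Complex.ofReal_re c
    have h2 : ((d:ℂ) * (r:ℂ)).re = d * r := by
      rw [← Complex.ofReal_mul, Complex.ofReal_re]
    rw [h1, h2]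
    congr 1
    have := integral_re (μ := ν.restrict (Set.Ioi 0)) (𝕜 := ℂ)
      (bern_integrable ν hν (r:ℂ) (by simpa using hr))
    simp only [RCLike.re_to_complex] at this
    rw [← this]
    exact integral_congr_ae (Filter.Eventually.of_forall fun y => bern_re_eq r y)
  -- Part 1
  have part1 : ∀ a b : ℝ, 0 ≤ a → 0 ≤ b → ∀ ξ : ℝ,
      ‖φ ((a : ℂ) + (ξ : ℂ) * Complex.I) - φ ((b : ℂ) + (ξ : ℂ) * Complex.I)‖ ≤
        (φ ((|a - b| : ℝ) : ℂ)).re - (φ 0).re := by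
    intro a b ha hb ξ
    set z1 : ℂ := (a:ℂ) + (ξ:ℂ) * Complex.I with hz1def
    set z2 : ℂ := (b:ℂ) + (ξ:ℂ) * Complex.I with hz2def
    have hz1 : (0:ℝ) ≤ z1.re := by rw [hz1def, hre]; exact ha
    have hz2 : (0:ℝ) ≤ z2.re := by rw [hz2def, hre]; exact hb
    have hI1 := bern_integrable ν hν z1 hz1
    have hI2 := bern_integrable ν hν z2 hz2
    have hdiff : φ z1 - φ z2 = (d:ℂ) * (z1 - z2) +
        ∫ y in Set.Ioi (0:ℝ),
          ((1 - Complex.exp (-z1 * (y:ℂ))) - (1 - Complex.exp (-z2 * (y:ℂ)))) ∂ν := by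
      rw [hφ z1 hz1, hφ z2 hz2, integral_sub hI1 hI2]
      ring
    have hz12 : z1 - z2 = ((a - b : ℝ) : ℂ) := by
      rw [hz1def, hz2def]; push_cast; ring
    have habs : 0 ≤ |a - b| := abs_nonneg _
    have hIr := bern_integrable_real ν hν (|a - b|) habs
    have hint : ‖∫ y in Set.Ioi (0:ℝ),
          ((1 - Complex.exp (-z1 * (y:ℂ))) - (1 - Complex.exp (-z2 * (y:ℂ)))) ∂ν‖ ≤
        ∫ y in Set.Ioi (0:ℝ), (1 - Real.exp (-(|a - b| * y))) ∂ν := by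
      calc ‖∫ y in Set.Ioi (0:ℝ),
            ((1 - Complex.exp (-z1 * (y:ℂ))) - (1 - Complex.exp (-z2 * (y:ℂ)))) ∂ν‖
          ≤ ∫ y in Set.Ioi (0:ℝ),
            ‖(1 - Complex.exp (-z1 * (y:ℂ))) - (1 - Complex.exp (-z2 * (y:ℂ)))‖ ∂ν :=
        norm_integral_le_integral_norm _
      _ ≤ ∫ y in Set.Ioi (0:ℝ), (1 - Real.exp (-(|a - b| * y))) ∂ν := by
          refine integral_mono_ae (hI1.sub hI2).norm hIr ?_
          filter_upwards [ae_restrict_mem measurableSet_Ioi] with y hy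
          have hy0 : (0:ℝ) < y := hy
          have : (1 - Complex.exp (-z1 * (y:ℂ))) - (1 - Complex.exp (-z2 * (y:ℂ)))
              = Complex.exp (-z2 * (y:ℂ)) - Complex.exp (-z1 * (y:ℂ)) := by ring
          rw [this]
          exact key_pointwise a b ξ y ha hb hy0.le
    calc ‖φ z1 - φ z2‖
        ≤ ‖(d:ℂ) * (z1 - z2)‖ + ‖∫ y in Set.Ioi (0:ℝ),
            ((1 - Complex.exp (-z1 * (y:ℂ))) - (1 - Complex.exp (-z2 * (y:ℂ)))) ∂ν‖ := by
          rw [hdiff]; exact norm_add_le _ _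
      _ ≤ d * |a - b| + ∫ y in Set.Ioi (0:ℝ), (1 - Real.exp (-(|a - b| * y))) ∂ν := by
          have : ‖(d:ℂ) * (z1 - z2)‖ = d * |a - b| := by
            rw [hz12, ← Complex.ofReal_mul, Complex.norm_real, Real.norm_eq_abs,
              abs_mul, abs_of_nonneg hd]
          rw [this]
          linarith
      _ = (φ ((|a - b| : ℝ) : ℂ)).re - (φ 0).re := by
          rw [hφr (|a - b|) habs, hφ0]; ring
  refine ⟨part1, ?_⟩
  -- Part 2
  intro a b ha hb hφb ξ
  set z2 : ℂ := (b:ℂ) + (ξ:ℂ) * Complex.I with hz2def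
  have hz2 : (0:ℝ) ≤ z2.re := by rw [hz2def, hre]; exact hb.le
  have hI2 := bern_integrable ν hν z2 hz2
  have hlow : (φ ((b:ℝ):ℂ)).re ≤ ‖φ z2‖ := by
    have hmid : (φ ((b:ℝ):ℂ)).re ≤ (φ z2).re := by
      rw [hφr b hb.le, hφ z2 hz2, Complex.add_re, Complex.add_re]
      have h1 : ((c:ℂ)).re = c := Complex.ofReal_re c
      have h2 : ((d:ℂ) * z2).re = d * b := by
        rw [hz2def]
        simp [Complex.mul_re, Complex.add_re, Complex.add_im, Complex.mul_im]
      rw [h1, h2]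
      have h3 : ∫ y in Set.Ioi (0:ℝ), (1 - Real.exp (-(b*y))) ∂ν ≤
          (∫ y in Set.Ioi (0:ℝ), (1 - Complex.exp (-z2 * (y:ℂ))) ∂ν).re := by
        have hint2 := integral_re (μ := ν.restrict (Set.Ioi 0)) (𝕜 := ℂ) hI2
        simp only [RCLike.re_to_complex] at hint2
        rw [← hint2]
        refine integral_mono_ae (bern_integrable_real ν hν b hb.le) hI2.re ?_
        filter_upwards [ae_restrict_mem measurableSet_Ioi] with y hy
        have hy0 : (0:ℝ) < y := hy
        show 1 - Real.exp (-(b*y)) ≤ (1 - Complex.exp (-z2 * (y:ℂ))).re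
        rw [Complex.sub_re, Complex.one_re, Complex.exp_re]
        have hre2 : (-z2 * (y:ℂ)).re = -(b*y) := by
          rw [hz2def]
          simp [Complex.mul_re, Complex.add_re, Complex.add_im, Complex.mul_im]
        rw [hre2]
        have hc1 := Real.cos_le_one ((-z2 * (y:ℂ)).im)
        have he := Real.exp_pos (-(b*y))
        nlinarith
      linarith
    calc (φ ((b:ℝ):ℂ)).re ≤ (φ z2).re := hmid
    _ ≤ ‖φ z2‖ := Complex.re_le_norm _
    _ = ‖φ z2‖ := rfl
  have hne : φ z2 ≠ 0 := by
    intro h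
    rw [h, norm_zero] at hlow
    linarith
  rw [div_sub_one hne, norm_div]
  have h1 := part1 a b ha hb.le ξ
  exact div_le_div₀ (le_trans (norm_nonneg _) h1) h1 hφb hlow
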